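/- Under the hypotheses of the previous estimate, if ‖DF‖_∞ = 1, then the noisy dissipation time satisfies τ(ε) ≥ (1 − e^{-1})/(C ‖∇f‖_∞ ε^β) for a suitable fixed test function f (e.g. f = e_{(1,0,…,0)}); i.e., τ(ε) ≳ ε^{-β}. -/

import Mathlib

open MeasureTheory
open scoped NNReal

noncomputable section

/-- The d-dimensional torus 𝕋^d. -/
abbrev Torus (d : ℕ) := Fin d → AddCircle (1 : ℝ)

/-- A Lipschitz function on the torus is in L². -/
lemma lipschitz_memℒp {d : ℕ} {h : Torus d → ℂ} {K : ℝ≥0} (hl : LipschitzWith K h) :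
    MemLp h 2 (volume : Measure (Torus d)) :=
  hl.continuous.memLp_of_hasCompactSupport (HasCompactSupport.of_compactSpace h)

/-- Under the hypotheses of the lower-bound estimate (measure-preserving C¹ map F with
`‖DF‖_∞ = 1`, i.e. F 1-Lipschitz; noise operator G_ε with
`‖G_ε h − h‖_{L²} ≤ C ε^β ‖∇h‖_∞` and `‖∇(G_ε h)‖_∞ ≤ ‖∇h‖_∞`), for a fixed test
function f (mean-zero, ‖f‖_{L²} = 1, `‖∇f‖_∞ ≤ N`, N > 0) the noisy dissipation
time τ(ε) (any τ with `‖T_ε^τ f‖ < e⁻¹`) satisfies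
`τ(ε) ≥ (1 − e⁻¹)/(C N ε^β)`, i.e. τ(ε) ≳ ε^{−β}. -/
theorem stmt14 (d : ℕ) (F : Torus d → Torus d)
    (hF : MeasurePreserving F volume volume)
    (hFL : LipschitzWith 1 F)
    (G : (Torus d → ℂ) → (Torus d → ℂ))
    (C ε β : ℝ) (hC : 0 < C) (hε : 0 < ε) (hβ : 0 < β)
    (hGnoise : ∀ (h : Torus d → ℂ) (K : ℝ≥0), LipschitzWith K h →
      (eLpNorm (fun x => G h x - h x) 2 volume).toReal ≤ C * ε ^ β * K)
    (hGlip : ∀ (h : Torus d → ℂ) (K : ℝ≥0), LipschitzWith K h →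
      LipschitzWith K (G h))
    (f : Torus d → ℂ) (N : ℝ≥0) (hN : 0 < (N : ℝ)) (hfl : LipschitzWith N f)
    (hf0 : (∫ x, f x) = 0) (hfn : (eLpNorm f 2 volume).toReal = 1)
    (τ : ℕ)
    (hτ : (eLpNorm ((fun h => G (h ∘ F))^[τ] f) 2 volume).toReal < Real.exp (-1)) :
    (1 - Real.exp (-1)) / (C * N * ε ^ β) ≤ τ := by
  set T : (Torus d → ℂ) → (Torus d → ℂ) := fun h => G (h ∘ F) with hT
  -- All iterates are N-Lipschitz.
  have hlip : ∀ n, LipschitzWith N (T^[n] f) := by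
    intro n
    induction n with
    | zero => simpa using hfl
    | succ n ih =>
      rw [Function.iterate_succ_apply']
      exact hGlip _ N (by simpa using ih.comp hFL)
  -- Lower bound on the L² norm of iterates.
  have key : ∀ n : ℕ, 1 - C * ε ^ β * N * n ≤ (eLpNorm (T^[n] f) 2 volume).toReal := by
    intro n
    induction n with
    | zero => simp [hfn]
    | succ n ih =>
      set g : Torus d → ℂ := (T^[n] f) ∘ F with hg
      have hglip : LipschitzWith N g := by simpa using (hlip n).comp hFL
      have hGglip : LipschitzWith N (G g) := hGlip _ N hglip
      have hEg : eLpNorm g 2 volume = eLpNorm (T^[n] f) 2 volume :=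
        eLpNorm_comp_measurePreserving (hlip n).continuous.aestronglyMeasurable hF
      -- triangle inequality: ‖g‖ ≤ ‖G g‖ + ‖G g − g‖
      have htri : eLpNorm g 2 volume ≤
          eLpNorm (G g) 2 volume + eLpNorm (fun x => G g x - g x) 2 volume := by
        have : eLpNorm (fun x => G g x - (G g x - g x)) 2 volume ≤
            eLpNorm (G g) 2 volume + eLpNorm (fun x => G g x - g x) 2 volume :=
          eLpNorm_sub_le hGglip.continuous.aestronglyMeasurable
            ((lipschitz_memℒp hGglip).sub (lipschitz_memℒp hglip)).aestronglyMeasurable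
            one_le_two
        simpa using this
      have hfin1 : eLpNorm (G g) 2 volume ≠ ⊤ := (lipschitz_memℒp hGglip).2.ne
      have hfin2 : eLpNorm (fun x => G g x - g x) 2 volume ≠ ⊤ :=
        ((lipschitz_memℒp hGglip).sub (lipschitz_memℒp hglip)).2.ne
      have htriR : (eLpNorm g 2 volume).toReal ≤
          (eLpNorm (G g) 2 volume).toReal +
            (eLpNorm (fun x => G g x - g x) 2 volume).toReal := by
        have := ENNReal.toReal_mono (by exact ENNReal.add_ne_top.2 ⟨hfin1, hfin2⟩) htri
        rwa [ENNReal.toReal_add hfin1 hfin2] at this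
      have hnoise : (eLpNorm (fun x => G g x - g x) 2 volume).toReal ≤ C * ε ^ β * N :=
        hGnoise g N hglip
      have hgn : (eLpNorm g 2 volume).toReal = (eLpNorm (T^[n] f) 2 volume).toReal := by
        rw [hEg]
      have hsucc : T^[n+1] f = G g := by
        rw [Function.iterate_succ_apply']
      rw [hsucc]
      push_cast
      have := ih
      rw [← hgn] at this
      nlinarith [htriR, hnoise, this]
  -- conclude
  have h1 : 1 - C * ε ^ β * N * τ < Real.exp (-1) := lt_of_le_of_lt (key τ) hτ
  have hden : 0 < C * N * ε ^ β := by positivity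
  rw [div_le_iff₀ hden]
  nlinarith [h1]
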